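/- Define H(t, x) = (2μ²(T−t) − 2μx + 3)·Φ((x − μ(T−t))/√(T−t)) − 2μ√(T−t)·φ((x − μ(T−t))/√(T−t)) − e^{2μx}·Φ((−x − μ(T−t))/√(T−t)) − 2(1 + μ²(T−t)) for 0 ≤ t < T and x ≥ 0. Then the partial derivative of H with respect to t equals H_t(t, x) = 2((x + μ(T−t))/(T−t)^{3/2})·φ((x − μ(T−t))/√(T−t)) + 2μ²(1 − Φ((x − μ(T−t))/√(T−t))). -/

import Mathlib

open Set

/-- Standard normal CDF. -/
noncomputable def stdNormalCDF (x : ℝ) : ℝ :=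
  ∫ t in Iic x, (Real.sqrt (2 * Real.pi))⁻¹ * Real.exp (-(t ^ 2) / 2)

/-- Standard normal density. -/
noncomputable def stdNormalPDF (x : ℝ) : ℝ :=
  (Real.sqrt (2 * Real.pi))⁻¹ * Real.exp (-(x ^ 2) / 2)

lemma integrable_stdPDF :
    MeasureTheory.Integrable (fun t : ℝ =>
      (Real.sqrt (2 * Real.pi))⁻¹ * Real.exp (-(t ^ 2) / 2)) := by
  have h := (integrable_exp_neg_mul_sq (show (0:ℝ) < 1/2 by norm_num)).const_mul
      (Real.sqrt (2 * Real.pi))⁻¹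
  convert h using 2 with t
  ring_nf

lemma continuous_stdPDF :
    Continuous (fun t : ℝ => (Real.sqrt (2 * Real.pi))⁻¹ * Real.exp (-(t ^ 2) / 2)) := by
  continuity

lemma hasDerivAt_stdNormalCDF (y : ℝ) :
    HasDerivAt stdNormalCDF (stdNormalPDF y) y := by
  have key : stdNormalCDF = fun x => stdNormalCDF 0 +
      ∫ t in (0:ℝ)..x, (Real.sqrt (2 * Real.pi))⁻¹ * Real.exp (-(t ^ 2) / 2) := by
    funext z
    rw [← intervalIntegral.integral_Iic_sub_Iic integrable_stdPDF.integrableOn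
      integrable_stdPDF.integrableOn]
    unfold stdNormalCDF
    ring
  rw [key]
  have hd : HasDerivAt (fun x => ∫ t in (0:ℝ)..x,
      (Real.sqrt (2 * Real.pi))⁻¹ * Real.exp (-(t ^ 2) / 2)) (stdNormalPDF y) y :=
    intervalIntegral.integral_hasDerivAt_right
      (integrable_stdPDF.intervalIntegrable)
      (continuous_stdPDF.stronglyMeasurableAtFilter _ _)
      continuous_stdPDF.continuousAt
  exact hd.const_add _

lemma hasDerivAt_stdNormalPDF (y : ℝ) :
    HasDerivAt stdNormalPDF (-y * stdNormalPDF y) y := by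
  have h1 : HasDerivAt (fun y : ℝ => -(y ^ 2) / 2) (-y) y := by
    have := ((hasDerivAt_pow 2 y).neg).div_const 2
    refine this.congr_deriv ?_
    push_cast
    ring
  have h2 := (Real.hasDerivAt_exp (-(y ^ 2) / 2)).comp y h1
  have h3 := h2.const_mul (Real.sqrt (2 * Real.pi))⁻¹
  refine h3.congr_deriv ?_
  unfold stdNormalPDF
  ring

lemma pdf_reflect (μ x s : ℝ) (hs : 0 < s) :
    Real.exp (2 * μ * x) * stdNormalPDF ((-x - μ * s) / Real.sqrt s)
      = stdNormalPDF ((x - μ * s) / Real.sqrt s) := by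
  unfold stdNormalPDF
  rw [mul_comm (Real.exp (2*μ*x)), mul_assoc, ← Real.exp_add]
  congr 1
  rw [div_pow, div_pow, Real.sq_sqrt hs.le]
  field_simp
  ring

/-- The function `H` from (4.2). -/
noncomputable def Hfun (μ T t x : ℝ) : ℝ :=
  (2 * μ ^ 2 * (T - t) - 2 * μ * x + 3) *
      stdNormalCDF ((x - μ * (T - t)) / Real.sqrt (T - t))
    - 2 * μ * Real.sqrt (T - t) * stdNormalPDF ((x - μ * (T - t)) / Real.sqrt (T - t))
    - Real.exp (2 * μ * x) * stdNormalCDF ((-x - μ * (T - t)) / Real.sqrt (T - t))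
    - 2 * (1 + μ ^ 2 * (T - t))

/-- the time derivative of `H` is given by formula (4.20). -/
theorem Hfun_time_deriv (μ T : ℝ) (hT : 0 < T) (t x : ℝ)
    (ht : t ∈ Ico 0 T) (hx : 0 ≤ x) :
    HasDerivAt (fun t' => Hfun μ T t' x)
      (2 * ((x + μ * (T - t)) / (T - t) ^ ((3:ℝ)/2)) *
          stdNormalPDF ((x - μ * (T - t)) / Real.sqrt (T - t))
        + 2 * μ ^ 2 * (1 - stdNormalCDF ((x - μ * (T - t)) / Real.sqrt (T - t)))) t := by
  obtain ⟨ht0, htT⟩ := ht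
  have hs : 0 < T - t := sub_pos.mpr htT
  have hsq : 0 < Real.sqrt (T - t) := Real.sqrt_pos.mpr hs
  -- basic derivatives
  have hTt : HasDerivAt (fun t' : ℝ => T - t') (-1) t := by
    simpa using (hasDerivAt_id t).const_sub T
  have hsqrt : HasDerivAt (fun t' : ℝ => Real.sqrt (T - t'))
      (1 / (2 * Real.sqrt (T - t)) * (-1)) t :=
    (Real.hasDerivAt_sqrt hs.ne').comp t hTt
  have hnumA : HasDerivAt (fun t' : ℝ => x - μ * (T - t')) (-(μ * -1)) t :=
    (hTt.const_mul μ).const_sub x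
  have hnumB : HasDerivAt (fun t' : ℝ => -x - μ * (T - t')) (-(μ * -1)) t :=
    (hTt.const_mul μ).const_sub (-x)
  have ha : HasDerivAt (fun t' : ℝ => (x - μ * (T - t')) / Real.sqrt (T - t'))
      ((-(μ * -1) * Real.sqrt (T - t) - (x - μ * (T - t)) *
        (1 / (2 * Real.sqrt (T - t)) * (-1))) / (Real.sqrt (T - t)) ^ 2) t :=
    hnumA.div hsqrt hsq.ne'
  have hb : HasDerivAt (fun t' : ℝ => (-x - μ * (T - t')) / Real.sqrt (T - t'))
      ((-(μ * -1) * Real.sqrt (T - t) - (-x - μ * (T - t)) *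
        (1 / (2 * Real.sqrt (T - t)) * (-1))) / (Real.sqrt (T - t)) ^ 2) t :=
    hnumB.div hsqrt hsq.ne'
  have hΦa : HasDerivAt (fun t' : ℝ =>
      stdNormalCDF ((x - μ * (T - t')) / Real.sqrt (T - t'))) _ t :=
    (hasDerivAt_stdNormalCDF _).comp t ha
  have hφa : HasDerivAt (fun t' : ℝ =>
      stdNormalPDF ((x - μ * (T - t')) / Real.sqrt (T - t'))) _ t :=
    (hasDerivAt_stdNormalPDF _).comp t ha
  have hΦb : HasDerivAt (fun t' : ℝ =>
      stdNormalCDF ((-x - μ * (T - t')) / Real.sqrt (T - t'))) _ t :=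
    (hasDerivAt_stdNormalCDF _).comp t hb
  have hA : HasDerivAt (fun t' : ℝ => 2 * μ ^ 2 * (T - t') - 2 * μ * x + 3) _ t :=
    ((hTt.const_mul (2 * μ ^ 2)).sub_const (2 * μ * x)).add_const 3
  have big := (((hA.mul hΦa).sub ((hsqrt.const_mul (2 * μ)).mul hφa)).sub
      (hΦb.const_mul (Real.exp (2 * μ * x)))).sub
      (((hTt.const_mul (μ ^ 2)).const_add 1).const_mul 2)
  have hfun_eq : (fun t' => Hfun μ T t' x) = fun t' =>
      ((2 * μ ^ 2 * (T - t') - 2 * μ * x + 3) *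
        stdNormalCDF ((x - μ * (T - t')) / Real.sqrt (T - t'))
      - 2 * μ * Real.sqrt (T - t') * stdNormalPDF ((x - μ * (T - t')) / Real.sqrt (T - t'))
      - Real.exp (2 * μ * x) * stdNormalCDF ((-x - μ * (T - t')) / Real.sqrt (T - t'))
      - 2 * (1 + μ ^ 2 * (T - t'))) := rfl
  rw [hfun_eq]
  refine big.congr_deriv ?_
  -- now a numeric identity
  have h32 : (T - t) ^ ((3:ℝ)/2) = (T - t) * Real.sqrt (T - t) := by
    rw [Real.sqrt_eq_rpow, ← Real.rpow_one_add' hs.le (by norm_num)]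
    norm_num
  have hrefl := pdf_reflect μ x (T - t) hs
  set u := Real.sqrt (T - t) with hu
  have hu2 : u ^ 2 = T - t := Real.sq_sqrt hs.le
  set pa := stdNormalPDF ((x - μ * (T - t)) / u) with hpa
  set pb := stdNormalPDF ((-x - μ * (T - t)) / u) with hpb
  set ca := stdNormalCDF ((x - μ * (T - t)) / u) with hca
  rw [h32, ← hu2]
  rw [show Real.exp (2 * μ * x) *
      (pb * ((-(μ * -1) * u - (-x - μ * u ^ 2) * (1 / (2 * u) * -1)) / u ^ 2))
      = pa * ((-(μ * -1) * u - (-x - μ * u ^ 2) * (1 / (2 * u) * -1)) / u ^ 2) by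
    rw [← mul_assoc, hrefl]]
  field_simp
  ring
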